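/- Let E be a finite-dimensional real inner product space, let A : E → E be a skew-adjoint linear endomorphism, and let B : E → E be a linear endomorphism commuting with A whose characteristic polynomial splits over ℝ (i.e., all complex eigenvalues of B are real). Then the kernel of A + B equals the intersection of the kernel of A and the kernel of B: (A + B) v = 0 if and only if A v = 0 and B v = 0. -/

import Mathlib

open RealInnerProductSpace

section Aux

variable {E : Type*} [NormedAddCommGroup E] [InnerProductSpace ℝ E]

lemma skew_inner_self (S : E →ₗ[ℝ] E)
    (hS : ∀ x y : E, ⟪S x, y⟫ = -⟪x, S y⟫) (x : E) : ⟪S x, x⟫ = 0 := by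
  have h1 := hS x x
  have h2 : ⟪S x, x⟫ = ⟪x, S x⟫ := real_inner_comm _ _
  linarith [h1, h2]

lemma skew_sq_ker (S : E →ₗ[ℝ] E)
    (hS : ∀ x y : E, ⟪S x, y⟫ = -⟪x, S y⟫) {w : E} (h : S (S w) = 0) : S w = 0 := by
  have h1 := hS (S w) w
  rw [h] at h1
  simpa using h1

lemma skew_sub_smul_inj (S : E →ₗ[ℝ] E)
    (hS : ∀ x y : E, ⟪S x, y⟫ = -⟪x, S y⟫) {r : ℝ} (hr : r ≠ 0) {w : E}
    (h : S w - r • w = 0) : w = 0 := by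
  have hSw : S w = r • w := by
    rw [sub_eq_zero] at h; exact h
  have h0 : ⟪S w, w⟫ = 0 := skew_inner_self S hS w
  rw [hSw, real_inner_smul_left] at h0
  rcases mul_eq_zero.mp h0 with h | h
  · exact absurd h hr
  · exact inner_self_eq_zero.mp h

lemma skew_prod_ker (S : E →ₗ[ℝ] E)
    (hS : ∀ x y : E, ⟪S x, y⟫ = -⟪x, S y⟫) :
    ∀ (l : List (Module.End ℝ E)),
      (∀ g ∈ l, ∃ r : ℝ, g = S - algebraMap ℝ (Module.End ℝ E) r) →
      ∀ v : E, l.prod v = 0 → S v = 0 := by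
  intro l
  induction l with
  | nil => intro _ v hv; simp at hv; simp [hv]
  | cons g t ih =>
    intro hmem v hv
    obtain ⟨r, rfl⟩ := hmem _ List.mem_cons_self
    have hmem' : ∀ g ∈ t, ∃ r : ℝ, g = S - algebraMap ℝ (Module.End ℝ E) r :=
      fun g hg => hmem g (List.mem_cons_of_mem _ hg)
    rw [List.prod_cons] at hv
    set P : Module.End ℝ E := t.prod with hP
    by_cases hr : r = 0
    · subst hr
      have hg0 : S - algebraMap ℝ (Module.End ℝ E) 0 = S := by simp
      rw [hg0] at hv
      have hcomm : Commute S P := by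
        apply Commute.list_prod_right
        intro y hy
        obtain ⟨a, rfl⟩ := hmem' y hy
        exact (Commute.refl S).sub_right (Algebra.commute_algebraMap_right a S)
      have hPSv : P (S v) = 0 := by
        have : (P * S) v = 0 := by rw [← hcomm.eq]; exact hv
        exact this
      exact skew_sq_ker S hS (ih hmem' (S v) hPSv)
    · have h1 : (S - algebraMap ℝ (Module.End ℝ E) r) (P v) = 0 := hv
      have hPv : P v = 0 := by
        apply skew_sub_smul_inj S hS hr
        simpa [Module.algebraMap_end_apply] using h1
      exact ih hmem' v hPv

end Aux

/-- If `A` is skew-adjoint, `B` commutes with `A`, and the characteristic polynomial of `B`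
splits over `ℝ` (all eigenvalues of `B` are real), then `ker (A + B) = ker A ⊓ ker B`. -/
theorem stmt_4 (E : Type*) [NormedAddCommGroup E] [InnerProductSpace ℝ E]
    [FiniteDimensional ℝ E] (A B : E →ₗ[ℝ] E)
    (hA : ∀ x y : E, ⟪A x, y⟫ = -⟪x, A y⟫)
    (hcomm : A ∘ₗ B = B ∘ₗ A)
    (hsplit : ((LinearMap.charpoly B).map (RingHom.id ℝ)).Splits) :
    ∀ v : E, (A + B) v = 0 ↔ A v = 0 ∧ B v = 0 := by
  intro v
  constructor
  · intro h
    set S : E →ₗ[ℝ] E := -A with hSdef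
    have hS : ∀ x y : E, ⟪S x, y⟫ = -⟪x, S y⟫ := by
      intro x y
      simp only [hSdef, LinearMap.neg_apply, inner_neg_left, inner_neg_right, hA x y]
    have h' : A v + B v = 0 := by simpa using h
    have hBv : B v = S v := by
      simp only [hSdef, LinearMap.neg_apply]
      exact eq_neg_of_add_eq_zero_right h'
    have hBS : Commute B S := by
      have hBA : Commute B A := hcomm.symm
      simpa [hSdef] using hBA.neg_right
    have hpow : ∀ k : ℕ, (B ^ k) v = (S ^ k) v := by
      intro k
      induction k with
      | zero => simp
      | succ n ihn =>
        have h1 : (B ^ (n + 1)) v = B ((B ^ n) v) := by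
          rw [pow_succ']; rfl
        rw [h1, ihn]
        have h2 : B ((S ^ n) v) = (S ^ n) (B v) :=
          LinearMap.ext_iff.mp (hBS.pow_right n).eq v
        rw [h2, hBv, pow_succ]
        rfl
    have haeval : ∀ p : Polynomial ℝ, (Polynomial.aeval B p) v = (Polynomial.aeval S p) v := by
      intro p
      rw [Polynomial.aeval_eq_sum_range (p := p) B, Polynomial.aeval_eq_sum_range (p := p) S]
      simp only [LinearMap.coe_sum, Finset.sum_apply, LinearMap.smul_apply]
      exact Finset.sum_congr rfl fun i _ => by rw [hpow i]
    have hchar : (Polynomial.aeval S (LinearMap.charpoly B)) v = 0 := by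
      rw [← haeval, LinearMap.aeval_self_charpoly]
      simp
    have hmonic : (LinearMap.charpoly B).Monic := LinearMap.charpoly_monic B
    have hfact : LinearMap.charpoly B =
        ((LinearMap.charpoly B).roots.map (fun a => Polynomial.X - Polynomial.C a)).prod :=
      Polynomial.Splits.eq_prod_roots_of_monic (by rw [Polynomial.map_id] at hsplit; exact hsplit) hmonic
    set L : List (Polynomial ℝ) :=
      ((LinearMap.charpoly B).roots.map (fun a => Polynomial.X - Polynomial.C a)).toList
      with hL
    have hfactL : LinearMap.charpoly B = L.prod := by
      rw [hfact, hL, Multiset.prod_toList]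
    have hprodL : ((L.map (Polynomial.aeval S)).prod : Module.End ℝ E) v = 0 := by
      rw [← map_list_prod (Polynomial.aeval S) L, ← hfactL]
      exact hchar
    have hSv : S v = 0 := by
      apply skew_prod_ker S hS (L.map (Polynomial.aeval S)) _ v hprodL
      intro g hg
      obtain ⟨q, hq, rfl⟩ := List.mem_map.mp hg
      have hq' : q ∈ ((LinearMap.charpoly B).roots.map
          (fun a => Polynomial.X - Polynomial.C a)) := by
        rw [hL] at hq
        exact (Multiset.mem_toList).mp hq
      obtain ⟨a, _, rfl⟩ := Multiset.mem_map.mp hq'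
      exact ⟨a, by simp [Polynomial.aeval_X, Polynomial.aeval_C, Algebra.algebraMap_eq_smul_one]⟩
    have hAv : A v = 0 := by
      have : (-A) v = 0 := hSv
      simpa using this
    exact ⟨hAv, by rw [hBv, hSv]⟩
  · rintro ⟨h1, h2⟩
    simp [LinearMap.add_apply, h1, h2]
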